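/- arXiv:2312.14820 — 2 statements merged into one kernel-verified Lean document; each statement's English description precedes it below -/
import Mathlib

section
/- For any constant sequence X = (x, x, …, x) ∈ (ℝ^d)^n, the Jacobian of self-attention f at X has operator norm exactly ‖V‖₂ with respect to the Frobenius norm; in particular if V = I_d then ‖D_X f‖₂ = 1. -/
open Matrix
open scoped RealInnerProductSpace

/-- Self-attention as a map between sequence spaces equipped with the Frobenius norm
(`PiLp 2` over Euclidean spaces). -/
noncomputable def attnF (n d k : ℕ) (A : Matrix (Fin d) (Fin d) ℝ)
    (V : Matrix (Fin k) (Fin d) ℝ) :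
    PiLp 2 (fun _ : Fin n => EuclideanSpace ℝ (Fin d)) →
      PiLp 2 (fun _ : Fin n => EuclideanSpace ℝ (Fin k)) :=
  fun x => WithLp.toLp 2 fun i => WithLp.toLp 2 (V.mulVec (∑ j, (Real.exp ((x i) ⬝ᵥ (Aᵀ.mulVec (x j))) /
      ∑ l, Real.exp ((x i) ⬝ᵥ (Aᵀ.mulVec (x l)))) • x j))

section Aux

variable {n d k : ℕ}

/-- the averaging map as a continuous linear map -/
noncomputable def attnAvg (n d : ℕ) :
    PiLp 2 (fun _ : Fin n => EuclideanSpace ℝ (Fin d)) →L[ℝ] EuclideanSpace ℝ (Fin d) :=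
  (n : ℝ)⁻¹ • ∑ j : Fin n, PiLp.proj 2 (fun _ : Fin n => EuclideanSpace ℝ (Fin d)) j

lemma attnAvg_apply (H : PiLp 2 (fun _ : Fin n => EuclideanSpace ℝ (Fin d))) :
    attnAvg n d H = (n : ℝ)⁻¹ • ∑ j, H j := by
  simp [attnAvg, ContinuousLinearMap.sum_apply]

/-- the claimed Jacobian -/
noncomputable def attnL (n d k : ℕ) (V : Matrix (Fin k) (Fin d) ℝ) :
    PiLp 2 (fun _ : Fin n => EuclideanSpace ℝ (Fin d)) →L[ℝ]
      PiLp 2 (fun _ : Fin n => EuclideanSpace ℝ (Fin k)) :=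
  ((PiLp.continuousLinearEquiv 2 ℝ (fun _ : Fin n => EuclideanSpace ℝ (Fin k))).symm.toContinuousLinearMap).comp
    (ContinuousLinearMap.pi fun _ =>
      (LinearMap.toContinuousLinearMap (Matrix.toEuclideanLin V)).comp (attnAvg n d))

lemma attnL_apply (V : Matrix (Fin k) (Fin d) ℝ)
    (H : PiLp 2 (fun _ : Fin n => EuclideanSpace ℝ (Fin d))) (i : Fin n) :
    attnL n d k V H i =
      LinearMap.toContinuousLinearMap (Matrix.toEuclideanLin V) (attnAvg n d H) := rfl

lemma dot_eq_inner (A : Matrix (Fin d) (Fin d) ℝ) (u v : EuclideanSpace ℝ (Fin d)) :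
    u ⬝ᵥ (Aᵀ.mulVec v) =
      ⟪u, LinearMap.toContinuousLinearMap (Matrix.toEuclideanLin Aᵀ) v⟫ := by
  simp [dotProduct, PiLp.inner_apply, RCLike.inner_apply, mul_comm,
    Matrix.toEuclideanLin_apply]

set_option maxHeartbeats 2000000 in
theorem attn_hasFDerivAt (hn : 0 < n) (A : Matrix (Fin d) (Fin d) ℝ)
    (V : Matrix (Fin k) (Fin d) ℝ) (x : EuclideanSpace ℝ (Fin d)) :
    HasFDerivAt (attnF n d k A V) (attnL n d k V)
      (WithLp.toLp 2 (fun _ => x) : PiLp 2 (fun _ : Fin n => EuclideanSpace ℝ (Fin d))) := by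
  classical
  set T : (EuclideanSpace ℝ (Fin d)) →L[ℝ] (EuclideanSpace ℝ (Fin d)) := LinearMap.toContinuousLinearMap (Matrix.toEuclideanLin Aᵀ) with hT
  set X₀ : (PiLp 2 (fun _ : Fin n => EuclideanSpace ℝ (Fin d))) := WithLp.toLp 2 (fun _ => x) with hX₀
  set c : ℝ := Real.exp ⟪x, T x⟫ with hc
  have hc0 : (0 : ℝ) < c := Real.exp_pos _
  set pr : Fin n → ((PiLp 2 (fun _ : Fin n => EuclideanSpace ℝ (Fin d))) →L[ℝ] (EuclideanSpace ℝ (Fin d))) := fun j => PiLp.proj 2 (fun _ : Fin n => (EuclideanSpace ℝ (Fin d))) j with hpr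
  -- rewrite attnF in inner-product form
  have hfun : attnF n d k A V = fun (X : (PiLp 2 (fun _ : Fin n => EuclideanSpace ℝ (Fin d)))) => WithLp.toLp 2 fun (i : Fin n) =>
      LinearMap.toContinuousLinearMap (Matrix.toEuclideanLin V)
        ((∑ l, Real.exp ⟪X i, T (X l)⟫)⁻¹ • ∑ j, Real.exp ⟪X i, T (X j)⟫ • X j) := by
    funext X
    show WithLp.toLp 2 _ = WithLp.toLp 2 _
    congr 1
    funext i
    have h1 : ∀ u v : (EuclideanSpace ℝ (Fin d)), u ⬝ᵥ (Aᵀ.mulVec v) = ⟪u, T v⟫ := dot_eq_inner A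
    show WithLp.toLp 2 (V.mulVec _) = _
    simp_rw [h1]
    rw [Finset.smul_sum]
    simp_rw [smul_smul, div_eq_inv_mul]
    show _ = WithLp.toLp 2 (V.mulVec (WithLp.ofLp _))
    rw [WithLp.ofLp_sum]
    simp only [WithLp.ofLp_smul]
  rw [hfun]
  -- component derivatives
  have key : ∀ i : Fin n, HasFDerivAt
      (fun X : (PiLp 2 (fun _ : Fin n => EuclideanSpace ℝ (Fin d))) =>
        LinearMap.toContinuousLinearMap (Matrix.toEuclideanLin V)
          ((∑ l, Real.exp ⟪X i, T (X l)⟫)⁻¹ • ∑ j, Real.exp ⟪X i, T (X j)⟫ • X j))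
      ((LinearMap.toContinuousLinearMap (Matrix.toEuclideanLin V)).comp (attnAvg n d)) X₀ := by
    intro i
    set b : Fin n → ((PiLp 2 (fun _ : Fin n => EuclideanSpace ℝ (Fin d))) →L[ℝ] ℝ) := fun j =>
      (fderivInnerCLM ℝ (X₀ i, T (X₀ j))).comp ((pr i).prod (T.comp (pr j))) with hb
    have hφ : ∀ j : Fin n,
        HasFDerivAt (fun X : (PiLp 2 (fun _ : Fin n => EuclideanSpace ℝ (Fin d))) => Real.exp ⟪X i, T (X j)⟫) (c • b j) X₀ := by
      intro j
      have hi : HasFDerivAt (fun X : (PiLp 2 (fun _ : Fin n => EuclideanSpace ℝ (Fin d))) => X i) (pr i) X₀ := (pr i).hasFDerivAt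
      have hj : HasFDerivAt (fun X : (PiLp 2 (fun _ : Fin n => EuclideanSpace ℝ (Fin d))) => T (X j)) (T.comp (pr j)) X₀ :=
        (T.comp (pr j)).hasFDerivAt
      exact (hi.inner ℝ hj).exp
    have hD : HasFDerivAt (fun X : (PiLp 2 (fun _ : Fin n => EuclideanSpace ℝ (Fin d))) => ∑ l, Real.exp ⟪X i, T (X l)⟫)
        (∑ l, c • b l) X₀ := HasFDerivAt.fun_sum (fun l _ => hφ l)
    have hD0 : (∑ l : Fin n, Real.exp ⟪X₀ i, T (X₀ l)⟫) = n * c := by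
      simp [hc, hX₀, mul_comm]
    have hD0ne : (∑ l : Fin n, Real.exp ⟪X₀ i, T (X₀ l)⟫) ≠ 0 := by
      rw [hD0]; exact (mul_pos (Nat.cast_pos.mpr hn) hc0).ne'
    have hinv : HasFDerivAt (fun X : (PiLp 2 (fun _ : Fin n => EuclideanSpace ℝ (Fin d))) => (∑ l, Real.exp ⟪X i, T (X l)⟫)⁻¹)
        ((ContinuousLinearMap.smulRight (1 : ℝ →L[ℝ] ℝ)
            (-((∑ l : Fin n, Real.exp ⟪X₀ i, T (X₀ l)⟫) ^ 2)⁻¹)).comp (∑ l, c • b l)) X₀ :=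
      (hasFDerivAt_inv hD0ne).comp X₀ hD
    have hN : HasFDerivAt (fun X : (PiLp 2 (fun _ : Fin n => EuclideanSpace ℝ (Fin d))) => ∑ j, Real.exp ⟪X i, T (X j)⟫ • X j)
        (∑ j, (c • pr j + (c • b j).smulRight x)) X₀ := by
      refine HasFDerivAt.fun_sum (fun j _ => ?_)
      exact (hφ j).smul ((pr j).hasFDerivAt)
    have hS := hinv.smul hN
    have hVc := (LinearMap.toContinuousLinearMap (Matrix.toEuclideanLin V)).hasFDerivAt
      (x := (∑ l, Real.exp ⟪X₀ i, T (X₀ l)⟫)⁻¹ • ∑ j, Real.exp ⟪X₀ i, T (X₀ j)⟫ • X₀ j)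
    have hcomp := hVc.comp X₀ hS
    refine hcomp.congr_fderiv ?_
    refine ContinuousLinearMap.ext fun H => ?_
    simp only [ContinuousLinearMap.comp_apply]
    congr 1
    simp only [ContinuousLinearMap.add_apply, ContinuousLinearMap.smul_apply,
      ContinuousLinearMap.sum_apply, ContinuousLinearMap.smulRight_apply,
      ContinuousLinearMap.comp_apply, ContinuousLinearMap.one_apply,
      ContinuousLinearMap.prod_apply, fderivInnerCLM_apply, hb,
      attnAvg_apply, smul_eq_mul]
    rw [hD0]
    have hsum1 : (∑ j : Fin n, Real.exp ⟪X₀ i, T (X₀ j)⟫ • X₀ j) = ((n : ℝ) * c) • x := by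
      simp [hc, hX₀, Finset.sum_const, Finset.card_univ,
        ← Nat.cast_smul_eq_nsmul ℝ, smul_smul]
    rw [hsum1]
    rw [Finset.sum_add_distrib]
    set β : ℝ := ∑ jj : Fin n,
      (⟪X₀ i, T ((pr jj) H)⟫ +
        ⟪(pr i) H, T (X₀ jj)⟫) with hβ
    have hsum2 : (∑ jj : Fin n,
        (c * (⟪X₀ i, T ((pr jj) H)⟫ +
          ⟪(pr i) H, T (X₀ jj)⟫)) • x) = (c * β) • x := by
      rw [← Finset.sum_smul, ← Finset.mul_sum]
    have hsum3 : (∑ jj : Fin n,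
        c * (⟪X₀ i, T ((pr jj) H)⟫ +
          ⟪(pr i) H, T (X₀ jj)⟫)) = c * β := by
      rw [← Finset.mul_sum]
    rw [hsum2, hsum3]
    have hsum4 : (∑ j : Fin n, c • (pr j) H)
        = c • ∑ j, H j := by
      rw [← Finset.smul_sum]; rfl
    rw [hsum4]
    have hnne : (n : ℝ) ≠ 0 := Nat.cast_ne_zero.mpr hn.ne'
    match_scalars <;> (field_simp; try ring)
  -- assemble
  have hpi : HasFDerivAt (fun (X : (PiLp 2 (fun _ : Fin n => EuclideanSpace ℝ (Fin d)))) (i : Fin n) =>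
      LinearMap.toContinuousLinearMap (Matrix.toEuclideanLin V)
        ((∑ l, Real.exp ⟪X i, T (X l)⟫)⁻¹ • ∑ j, Real.exp ⟪X i, T (X j)⟫ • X j))
      (ContinuousLinearMap.pi fun _ : Fin n =>
        (LinearMap.toContinuousLinearMap (Matrix.toEuclideanLin V)).comp (attnAvg n d)) X₀ := by
    apply hasFDerivAt_pi''
    intro i
    rw [ContinuousLinearMap.proj_pi]
    exact key i
  have hfinal := ((PiLp.continuousLinearEquiv 2 ℝ
      (fun _ : Fin n => EuclideanSpace ℝ (Fin k))).symm.toContinuousLinearMap.hasFDerivAt).comp X₀ hpi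
  exact hfinal.congr_fderiv rfl

end Aux

set_option maxHeartbeats 1000000 in
theorem norm_attnL (hn : 0 < n) (V : Matrix (Fin k) (Fin d) ℝ) :
    ‖attnL n d k V‖ = ‖LinearMap.toContinuousLinearMap (Matrix.toEuclideanLin V)‖ := by
  set Vc := LinearMap.toContinuousLinearMap (Matrix.toEuclideanLin V) with hVc
  have hnne : (n : ℝ) ≠ 0 := Nat.cast_ne_zero.mpr hn.ne'
  have hnpos : (0 : ℝ) < n := Nat.cast_pos.mpr hn
  apply le_antisymm
  · refine ContinuousLinearMap.opNorm_le_bound _ (norm_nonneg Vc) (fun H => ?_)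
    have h1 : ‖attnL n d k V H‖ ^ 2 = n * ‖Vc (attnAvg n d H)‖ ^ 2 := by
      rw [PiLp.norm_sq_eq_of_L2]
      simp only [attnL_apply, Finset.sum_const, Finset.card_univ, nsmul_eq_mul, Fintype.card_fin, ← hVc]
    have h2 : ‖attnAvg n d H‖ ^ 2 ≤ (n : ℝ)⁻¹ * ‖H‖ ^ 2 := by
      rw [attnAvg_apply, norm_smul]
      have h3 : ‖∑ j, H j‖ ^ 2 ≤ (n : ℝ) * ∑ j, ‖H j‖ ^ 2 := by
        calc ‖∑ j, H j‖ ^ 2 ≤ (∑ j, ‖H j‖) ^ 2 :=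
              pow_le_pow_left₀ (norm_nonneg _) (norm_sum_le _ _) 2
          _ ≤ (n : ℝ) * ∑ j, ‖H j‖ ^ 2 := by
              simpa [Finset.card_univ] using
                sq_sum_le_card_mul_sum_sq (s := Finset.univ) (f := fun j : Fin n => ‖H j‖)
      have h4 : ‖H‖ ^ 2 = ∑ j, ‖H j‖ ^ 2 := PiLp.norm_sq_eq_of_L2 _ H
      rw [mul_pow, h4]
      calc ‖(n:ℝ)⁻¹‖ ^ 2 * ‖∑ j, H j‖ ^ 2 ≤ ((n:ℝ)⁻¹)^2 * ((n:ℝ) * ∑ j, ‖H j‖ ^ 2) := by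
            rw [Real.norm_eq_abs, sq_abs]
            gcongr
        _ = (n : ℝ)⁻¹ * ∑ j, ‖H j‖ ^ 2 := by field_simp
    have h5 : ‖attnL n d k V H‖ ^ 2 ≤ (‖Vc‖ * ‖H‖) ^ 2 := by
      rw [h1]
      calc (n:ℝ) * ‖Vc (attnAvg n d H)‖ ^ 2 ≤ (n:ℝ) * ((‖Vc‖ * ‖attnAvg n d H‖) ^ 2) := by
            gcongr
            exact Vc.le_opNorm _
        _ = (n:ℝ) * ‖Vc‖^2 * ‖attnAvg n d H‖ ^ 2 := by ring
        _ ≤ (n:ℝ) * ‖Vc‖^2 * ((n : ℝ)⁻¹ * ‖H‖ ^ 2) := by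
            exact mul_le_mul_of_nonneg_left h2 (by positivity)
        _ = ‖Vc‖^2 * ‖H‖^2 := by field_simp
        _ = (‖Vc‖ * ‖H‖) ^ 2 := by ring
    have := Real.sqrt_le_sqrt h5
    rwa [Real.sqrt_sq (norm_nonneg _), Real.sqrt_sq (by positivity)] at this
  · refine ContinuousLinearMap.opNorm_le_bound _ (norm_nonneg _) (fun h => ?_)
    set H : PiLp 2 (fun _ : Fin n => EuclideanSpace ℝ (Fin d)) := WithLp.toLp 2 (fun _ => h) with hH
    have havg : attnAvg n d H = h := by
      rw [attnAvg_apply]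
      simp [hH, Finset.sum_const, Finset.card_univ, ← Nat.cast_smul_eq_nsmul ℝ, smul_smul,
        inv_mul_cancel₀ hnne]
    have hHnorm : ‖H‖ ^ 2 = n * ‖h‖ ^ 2 := by
      rw [PiLp.norm_sq_eq_of_L2]
      simp [hH, Finset.sum_const, Finset.card_univ]
    have hLH : ‖attnL n d k V H‖ ^ 2 = n * ‖Vc h‖ ^ 2 := by
      rw [PiLp.norm_sq_eq_of_L2]
      simp only [attnL_apply, havg, Finset.sum_const, Finset.card_univ, nsmul_eq_mul, Fintype.card_fin, ← hVc]
    have hle := (attnL n d k V).le_opNorm H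
    have hsq : ‖attnL n d k V H‖ ^ 2 ≤ (‖attnL n d k V‖ * ‖H‖) ^ 2 := by
      exact pow_le_pow_left₀ (norm_nonneg _) hle 2
    rw [hLH, mul_pow, hHnorm] at hsq
    have h6 : ‖Vc h‖ ^ 2 ≤ (‖attnL n d k V‖ * ‖h‖) ^ 2 := by
      rw [mul_pow]
      nlinarith [hsq, hnpos]
    have := Real.sqrt_le_sqrt h6
    rwa [Real.sqrt_sq (norm_nonneg _), Real.sqrt_sq (by positivity)] at this

/-- at a constant sequence `X = (x, …, x)`, the Jacobian of self-attention
has operator norm (w.r.t. the Frobenius norm) exactly `‖V‖₂`. -/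
theorem attn_jacobian_const_seq {n d k : ℕ} (hn : 0 < n)
    (A : Matrix (Fin d) (Fin d) ℝ) (V : Matrix (Fin k) (Fin d) ℝ)
    (x : EuclideanSpace ℝ (Fin d)) :
    ‖fderiv ℝ (attnF n d k A V)
        (WithLp.toLp 2 (fun _ => x) : PiLp 2 (fun _ : Fin n => EuclideanSpace ℝ (Fin d)))‖ =
      ‖LinearMap.toContinuousLinearMap (Matrix.toEuclideanLin V)‖ := by
  have i1 : ContinuousSMul ℝ (PiLp 2 (fun _ : Fin n => EuclideanSpace ℝ (Fin d))) := IsBoundedSMul.continuousSMul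
  have i2 : ContinuousSMul ℝ (PiLp 2 (fun _ : Fin n => EuclideanSpace ℝ (Fin k))) := IsBoundedSMul.continuousSMul
  rw [(attn_hasFDerivAt hn A V x).fderiv]
  exact norm_attnL hn V
end

section
/- Let A ∈ ℝ^{d×d} be nonzero. The set of sequences (x₁,…,x_n) in the closed unit ball of ℝ^d raised to the n-th power for which some i has the maximum max_{1≤j≤n} x_iᵀAᵀx_j attained at more than one index j has Lebesgue measure zero. -/
open Matrix MeasureTheory

open Set
open scoped Pointwise

lemma hyperplane_null {d : ℕ} (w : EuclideanSpace ℝ (Fin d)) (hw : w ≠ 0) (c : ℝ) :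
    volume {v : EuclideanSpace ℝ (Fin d) | w ⬝ᵥ v = c} = 0 := by
  have hdot : ∀ v : EuclideanSpace ℝ (Fin d), w ⬝ᵥ v = (inner ℝ w v : ℝ) := by
    intro v
    rw [PiLp.inner_apply]
    simp [dotProduct, RCLike.inner_apply, mul_comm]
  have hker : LinearMap.ker (innerSL ℝ w).toLinearMap ≠ ⊤ := by
    intro h
    have hwker : w ∈ LinearMap.ker (innerSL ℝ w).toLinearMap := h ▸ Submodule.mem_top
    have h0 : (inner ℝ w w : ℝ) = 0 := hwker
    exact hw (inner_self_eq_zero.mp h0)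
  set v₀ : EuclideanSpace ℝ (Fin d) := (c / ‖w‖ ^ 2) • w with hv₀def
  have hnw : ‖w‖ ≠ 0 := norm_ne_zero_iff.mpr hw
  have hv₀ : (inner ℝ w v₀ : ℝ) = c := by
    rw [hv₀def, real_inner_smul_right, real_inner_self_eq_norm_sq]
    field_simp
  have hset : {v : EuclideanSpace ℝ (Fin d) | w ⬝ᵥ v = c}
      = v₀ +ᵥ (LinearMap.ker (innerSL ℝ w).toLinearMap : Set (EuclideanSpace ℝ (Fin d))) := by
    ext v
    rw [Set.mem_vadd_set_iff_neg_vadd_mem]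
    simp only [mem_setOf_eq, SetLike.mem_coe, LinearMap.mem_ker, hdot]
    constructor
    · intro h
      show (inner ℝ w (-v₀ + v) : ℝ) = 0
      rw [inner_add_right, inner_neg_right, hv₀, h]; ring
    · intro h
      have h2 : (inner ℝ w (-v₀ + v) : ℝ) = 0 := h
      rw [inner_add_right, inner_neg_right, hv₀] at h2
      linarith
  rw [hset, measure_vadd]
  exact MeasureTheory.Measure.addHaar_submodule _ _ hker

lemma mulVec_ker_null {d : ℕ} (A : Matrix (Fin d) (Fin d) ℝ) (hA : A ≠ 0) :
    volume {v : EuclideanSpace ℝ (Fin d) | A *ᵥ v = 0} = 0 := by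
  obtain ⟨b, a, hba⟩ : ∃ b a, A b a ≠ 0 := by
    by_contra h
    push_neg at h
    exact hA (Matrix.ext fun b a => h b a)
  set w : EuclideanSpace ℝ (Fin d) := (EuclideanSpace.equiv (Fin d) ℝ).symm (A b) with hwdef
  have hw : w ≠ 0 := by
    intro h
    apply hba
    have := congrArg (fun u : EuclideanSpace ℝ (Fin d) => u a) h
    simpa [hwdef] using this
  have hsub : {v : EuclideanSpace ℝ (Fin d) | A *ᵥ v = 0}
      ⊆ {v : EuclideanSpace ℝ (Fin d) | w ⬝ᵥ v = 0} := by
    intro v hv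
    have h1 : (A *ᵥ v) b = 0 := by rw [Set.mem_setOf_eq.mp hv]; rfl
    show w ⬝ᵥ v = 0
    rw [← h1]
    rfl
  exact measure_mono_null hsub (hyperplane_null w hw 0)

lemma eval_preimage_null {n d : ℕ} {Z : Set (EuclideanSpace ℝ (Fin d))} (hZm : MeasurableSet Z)
    (hZ : volume Z = 0) (i : Fin (n + 1)) :
    volume {x : Fin (n + 1) → EuclideanSpace ℝ (Fin d) | x i ∈ Z} = 0 := by
  have hmp := volume_preserving_piFinSuccAbove (fun _ : Fin (n + 1) => EuclideanSpace ℝ (Fin d)) i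
  have hs : {x : Fin (n + 1) → EuclideanSpace ℝ (Fin d) | x i ∈ Z}
      = (MeasurableEquiv.piFinSuccAbove (fun _ => EuclideanSpace ℝ (Fin d)) i) ⁻¹'
        (Z ×ˢ (univ : Set (Fin n → EuclideanSpace ℝ (Fin d)))) := by
    ext x
    simp [MeasurableEquiv.piFinSuccAbove]
    rfl
  rw [hs, hmp.measure_preimage (hZm.prod MeasurableSet.univ).nullMeasurableSet,
    Measure.volume_eq_prod, Measure.prod_prod, hZ, zero_mul]

lemma slice_null {n d : ℕ} (A : Matrix (Fin d) (Fin d) ℝ) (k i m : Fin (n + 1))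
    (hik : i ≠ k) (hmk : m ≠ k) :
    volume {x : Fin (n + 1) → EuclideanSpace ℝ (Fin d) |
      A *ᵥ x i ≠ 0 ∧ (A *ᵥ x i) ⬝ᵥ x k = (A *ᵥ x i) ⬝ᵥ x m} = 0 := by
  obtain ⟨i', hi'⟩ := Fin.exists_succAbove_eq hik
  obtain ⟨m', hm'⟩ := Fin.exists_succAbove_eq hmk
  have hmp := volume_preserving_piFinSuccAbove (fun _ : Fin (n + 1) => EuclideanSpace ℝ (Fin d)) k
  set T : Set ((EuclideanSpace ℝ (Fin d)) × (Fin n → EuclideanSpace ℝ (Fin d))) :=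
    {p | A *ᵥ p.2 i' ≠ 0 ∧ (A *ᵥ p.2 i') ⬝ᵥ p.1 = (A *ᵥ p.2 i') ⬝ᵥ p.2 m'} with hTdef
  have hc1 : Continuous (fun p : (EuclideanSpace ℝ (Fin d)) × (Fin n → EuclideanSpace ℝ (Fin d))
      => A *ᵥ p.2 i' : _ → (Fin d → ℝ)) :=
    (A.mulVecLin.continuous_of_finiteDimensional).comp
      ((PiLp.continuous_ofLp 2 _).comp ((continuous_apply i').comp continuous_snd))
  have hproj : ∀ b : Fin d, Continuous (fun v : EuclideanSpace ℝ (Fin d) => v b) :=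
    fun b => (continuous_apply b).comp (EuclideanSpace.equiv (Fin d) ℝ).continuous
  have hc2 : Continuous (fun p : (EuclideanSpace ℝ (Fin d)) × (Fin n → EuclideanSpace ℝ (Fin d))
      => (A *ᵥ p.2 i') ⬝ᵥ p.1) := by
    unfold dotProduct
    exact continuous_finset_sum _ fun b _ =>
      ((continuous_apply b).comp hc1).mul ((hproj b).comp continuous_fst)
  have hc3 : Continuous (fun p : (EuclideanSpace ℝ (Fin d)) × (Fin n → EuclideanSpace ℝ (Fin d))
      => (A *ᵥ p.2 i') ⬝ᵥ p.2 m') := by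
    unfold dotProduct
    exact continuous_finset_sum _ fun b _ =>
      ((continuous_apply b).comp hc1).mul
        ((hproj b).comp ((continuous_apply m').comp continuous_snd))
  have hTm : MeasurableSet T := by
    apply MeasurableSet.inter
    · exact (hc1.measurable (measurableSet_singleton 0)).compl
    · exact measurableSet_eq_fun hc2.measurable hc3.measurable
  have hs : {x : Fin (n + 1) → EuclideanSpace ℝ (Fin d) |
      A *ᵥ x i ≠ 0 ∧ (A *ᵥ x i) ⬝ᵥ x k = (A *ᵥ x i) ⬝ᵥ x m}
      = (MeasurableEquiv.piFinSuccAbove (fun _ => EuclideanSpace ℝ (Fin d)) k) ⁻¹' T := by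
    ext x
    simp only [hTdef, mem_setOf_eq, mem_preimage, MeasurableEquiv.piFinSuccAbove,
      MeasurableEquiv.coe_mk, Equiv.symm_symm]
    change _ ↔ A *ᵥ x (k.succAbove i') ≠ 0 ∧ A *ᵥ x (k.succAbove i') ⬝ᵥ x k
      = A *ᵥ x (k.succAbove i') ⬝ᵥ x (k.succAbove m')
    simp [hi', hm']
  rw [hs, hmp.measure_preimage hTm.nullMeasurableSet, Measure.volume_eq_prod,
    Measure.prod_apply_symm hTm]
  have hzero : ∀ y : Fin n → EuclideanSpace ℝ (Fin d),
      volume ((fun v : EuclideanSpace ℝ (Fin d) => (v, y)) ⁻¹' T) = 0 := by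
    intro y
    by_cases hy : A *ᵥ y i' = 0
    · have : ((fun v : EuclideanSpace ℝ (Fin d) => (v, y)) ⁻¹' T) = ∅ := by
        ext v; simp [hTdef, hy]
      rw [this, measure_empty]
    · have hw : ((EuclideanSpace.equiv (Fin d) ℝ).symm (A *ᵥ y i')
          : EuclideanSpace ℝ (Fin d)) ≠ 0 := fun h =>
          hy ((EuclideanSpace.equiv (Fin d) ℝ).symm.injective (h.trans (map_zero _).symm))
      refine measure_mono_null ?_
        (hyperplane_null ((EuclideanSpace.equiv (Fin d) ℝ).symm (A *ᵥ y i')) hw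
          ((A *ᵥ y i') ⬝ᵥ y m'))
      intro v hv
      exact hv.2
  simp only [hzero]
  simp

/-- for `A ≠ 0`, the set of sequences in the unit ball for which some row
`i` attains the maximum of `j ↦ x_iᵀAᵀx_j` at more than one index has Lebesgue
measure zero. -/
theorem argmax_nonunique_measure_zero {n d : ℕ}
    (A : Matrix (Fin d) (Fin d) ℝ) (hA : A ≠ 0) :
    volume {x : Fin n → EuclideanSpace ℝ (Fin d) |
      (∀ i, ‖x i‖ ≤ 1) ∧
      ∃ i j j', j ≠ j' ∧
        (∀ l, (x i) ⬝ᵥ (Aᵀ.mulVec (x l)) ≤ (x i) ⬝ᵥ (Aᵀ.mulVec (x j))) ∧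
        (∀ l, (x i) ⬝ᵥ (Aᵀ.mulVec (x l)) ≤ (x i) ⬝ᵥ (Aᵀ.mulVec (x j')))} = 0 := by
  obtain _ | n := n
  · have hempty : {x : Fin 0 → EuclideanSpace ℝ (Fin d) |
        (∀ i, ‖x i‖ ≤ 1) ∧
        ∃ i j j', j ≠ j' ∧
          (∀ l, (x i) ⬝ᵥ (Aᵀ.mulVec (x l)) ≤ (x i) ⬝ᵥ (Aᵀ.mulVec (x j))) ∧
          (∀ l, (x i) ⬝ᵥ (Aᵀ.mulVec (x l)) ≤ (x i) ⬝ᵥ (Aᵀ.mulVec (x j')))} = ∅ := by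
      ext x
      simp only [Set.mem_setOf_eq, Set.mem_empty_iff_false, iff_false, not_and]
      rintro - ⟨i, -⟩
      exact i.elim0
    rw [hempty, measure_empty]
  · set Z : Set (EuclideanSpace ℝ (Fin d)) := {v | A *ᵥ v = 0} with hZdef
    have hZm : MeasurableSet Z := by
      have hcont : Continuous (fun v : EuclideanSpace ℝ (Fin d) => A *ᵥ v) :=
        A.mulVecLin.continuous_of_finiteDimensional.comp (PiLp.continuous_ofLp 2 _)
      exact hcont.measurable (measurableSet_singleton 0)
    have hZ : volume Z = 0 := mulVec_ker_null A hA
    set N : Set (Fin (n + 1) → EuclideanSpace ℝ (Fin d)) :=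
      (⋃ i, {x | x i ∈ Z}) ∪
        ⋃ i, ⋃ k, ⋃ m, ⋃ (_ : i ≠ k), ⋃ (_ : m ≠ k),
          {x : Fin (n + 1) → EuclideanSpace ℝ (Fin d) |
            A *ᵥ x i ≠ 0 ∧ (A *ᵥ x i) ⬝ᵥ x k = (A *ᵥ x i) ⬝ᵥ x m} with hNdef
    have hN : volume N = 0 := by
      apply measure_union_null
      · exact measure_iUnion_null fun i => eval_preimage_null hZm hZ i
      · exact measure_iUnion_null fun i => measure_iUnion_null fun k =>
          measure_iUnion_null fun m => measure_iUnion_null fun hik =>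
          measure_iUnion_null fun hmk => slice_null A k i m hik hmk
    refine measure_mono_null ?_ hN
    rintro x ⟨-, i, j, j', hjj', hj, hj'⟩
    have eq1 : (x i) ⬝ᵥ (Aᵀ.mulVec (x j)) = (x i) ⬝ᵥ (Aᵀ.mulVec (x j')) :=
      le_antisymm (hj' j) (hj j')
    have hconv : ∀ u : EuclideanSpace ℝ (Fin d),
        (x i) ⬝ᵥ (Aᵀ.mulVec u) = (A *ᵥ x i) ⬝ᵥ u := by
      intro u
      rw [Matrix.dotProduct_mulVec, Matrix.vecMul_transpose]
    have eq2 : (A *ᵥ x i) ⬝ᵥ x j = (A *ᵥ x i) ⬝ᵥ x j' := by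
      rw [← hconv, ← hconv]; exact eq1
    by_cases h0 : A *ᵥ x i = 0
    · exact Or.inl (Set.mem_iUnion.2 ⟨i, h0⟩)
    · refine Or.inr ?_
      by_cases hji : j = i
      · refine Set.mem_iUnion.2 ⟨i, Set.mem_iUnion.2 ⟨j', Set.mem_iUnion.2 ⟨j,
          Set.mem_iUnion.2 ⟨?_, Set.mem_iUnion.2 ⟨?_, h0, eq2.symm⟩⟩⟩⟩⟩
        · rw [← hji]; exact hjj'
        · exact hjj'
      · exact Set.mem_iUnion.2 ⟨i, Set.mem_iUnion.2 ⟨j, Set.mem_iUnion.2 ⟨j',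
          Set.mem_iUnion.2 ⟨fun h => hji h.symm, Set.mem_iUnion.2 ⟨hjj'.symm, h0, eq2⟩⟩⟩⟩⟩
end
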